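/- Let S be a unitary operator with S² = I on a Hilbert space H, Γ a closed subspace with projection Π, T = ΠS restricted to Γ, and suppose v ∈ Γ is a normalized eigenvector of T with eigenvalue λ = cos θ where 0 < θ < π. Define Ω± = (1/(√2 sin θ))(v − e^{±iθ} S v). Then, with C = 2Π − I and U = SC, one has U Ω± = e^{±iθ} Ω±. -/

import Mathlib

theorem stmt1 {H : Type*} [NormedAddCommGroup H] [InnerProductSpace ℂ H]
    (S : H ≃ₗᵢ[ℂ] H) (hS : ∀ x, S (S x) = x)
    (K : Submodule ℂ H) [CompleteSpace K]
    (U : H → H)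
    (hU : ∀ x, U x = S ((2 : ℂ) • ((K.orthogonalProjectionOnto x : H)) - x))
    (θ : ℝ) (hθ₁ : 0 < θ) (hθ₂ : θ < Real.pi)
    (v : H) (hv : v ∈ K) (hnorm : ‖v‖ = 1)
    (heig : ((K.orthogonalProjectionOnto (S v)) : H) = ((Real.cos θ : ℂ)) • v)
    (s : ℝ) (hs : s = 1 ∨ s = -1) :
    U ((((Real.sqrt 2 * Real.sin θ : ℝ) : ℂ)⁻¹) •
        (v - Complex.exp ((s : ℂ) * θ * Complex.I) • S v))
      = Complex.exp ((s : ℂ) * θ * Complex.I) •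
        ((((Real.sqrt 2 * Real.sin θ : ℝ) : ℂ)⁻¹) •
          (v - Complex.exp ((s : ℂ) * θ * Complex.I) • S v)) := by
  set e : ℂ := Complex.exp ((s : ℂ) * θ * Complex.I) with he_def
  set c : ℂ := (((Real.sqrt 2 * Real.sin θ : ℝ) : ℂ))⁻¹ with hc_def
  have hπv : ((K.orthogonalProjectionOnto v : H)) = v :=
    Submodule.starProjection_eq_self_iff.mpr hv
  have hkey : e * e + 1 = 2 * (Real.cos θ : ℂ) * e := by
    rcases hs with h | h <;> subst h
    · simp only [he_def, Complex.ofReal_one, one_mul]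
      rw [Complex.exp_mul_I, Complex.ofReal_cos]
      linear_combination (Complex.sin (θ:ℂ))^2 * Complex.I_sq -
        Complex.sin_sq_add_cos_sq (θ:ℂ)
    · rw [he_def, show ((-1:ℝ):ℂ) * θ * Complex.I = ((-θ:ℝ):ℂ) * Complex.I by
        push_cast; ring, Complex.exp_mul_I, Complex.ofReal_neg, Complex.cos_neg,
        Complex.sin_neg, Complex.ofReal_cos]
      linear_combination (Complex.sin (θ:ℂ))^2 * Complex.I_sq -
        Complex.sin_sq_add_cos_sq (θ:ℂ)
  have hP : ((K.orthogonalProjectionOnto (c • (v - e • S v)) : H))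
      = c • (v - (e * (Real.cos θ : ℂ)) • v) := by
    simp [map_sub, map_smul, hπv, heig, smul_smul, mul_comm]
  have hSS : S (S v) = v := hS v
  rw [hU, hP]
  simp only [map_sub, map_smul, hSS]
  simp only [Complex.ofReal_cos] at hkey ⊢
  match_scalars
  · linear_combination c * hkey
  · ring
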